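/- The entropy flux condition holds for special RHD: the gradient of q_k(U) = η(U)v_k equals η'(U) F_k'(U), i.e., (η, q_k) is an entropy pair for the flux F_k, for smooth states with ρ, p > 0, |v| < 1. -/

import Mathlib

set_option maxHeartbeats 4000000

open ContinuousLinearMap

/-- Entropy flux compatibility for special RHD: viewing everything as functions
of the primitive variables `z = (ρ, v, p)`, the gradient of the entropy flux
`q_k = η v_k` equals the entropy variables `V = η'(U)` contracted with the
Jacobian of the flux `F_k`, i.e. `∇ q_k = V · ∂F_k/∂z` in every direction `w`.
The flux components are `F_k = (D v_k, (m v_k + p e_k)ᵀ, m_k)ᵀ` with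
`D = ρW`, `m = ρhW²v`, and
`V = ((Γ−s)/(Γ−1) + ρ/p, ρWvᵀ/p, −ρW/p)ᵀ`, `s = ln(p/ρ^Γ)`. -/
theorem rhd_entropy_flux_compatibility (d : ℕ) (Γ : ℝ) (hΓ1 : 1 < Γ) (hΓ2 : Γ ≤ 2)
    (k : Fin d) (z : ℝ × (Fin d → ℝ) × ℝ)
    (hρ : 0 < z.1) (hp : 0 < z.2.2) (hv : ∑ i, z.2.1 i ^ 2 < 1) :
    let Wf : ℝ × (Fin d → ℝ) × ℝ → ℝ := fun y => 1 / Real.sqrt (1 - ∑ i, y.2.1 i ^ 2)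
    let hf : ℝ × (Fin d → ℝ) × ℝ → ℝ := fun y => 1 + Γ * y.2.2 / ((Γ - 1) * y.1)
    let sf : ℝ × (Fin d → ℝ) × ℝ → ℝ := fun y => Real.log (y.2.2 / y.1 ^ Γ)
    let ηf : ℝ × (Fin d → ℝ) × ℝ → ℝ := fun y => -(y.1 * Wf y * sf y) / (Γ - 1)
    -- entropy flux q_k = η v_k
    let qf : ℝ × (Fin d → ℝ) × ℝ → ℝ := fun y => ηf y * y.2.1 k
    -- flux components: mass, momentum (i = 1..d), energy
    let F0 : ℝ × (Fin d → ℝ) × ℝ → ℝ := fun y => y.1 * Wf y * y.2.1 k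
    let Fm : Fin d → ℝ × (Fin d → ℝ) × ℝ → ℝ := fun i y =>
      y.1 * hf y * (Wf y) ^ 2 * y.2.1 i * y.2.1 k + y.2.2 * (if i = k then 1 else 0)
    let FE : ℝ × (Fin d → ℝ) × ℝ → ℝ := fun y => y.1 * hf y * (Wf y) ^ 2 * y.2.1 k
    -- entropy variables V = η'(U)
    let V0 : ℝ := (Γ - sf z) / (Γ - 1) + z.1 / z.2.2
    let Vm : Fin d → ℝ := fun i => z.1 * Wf z * z.2.1 i / z.2.2
    let VE : ℝ := -(z.1 * Wf z) / z.2.2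
    ∀ w : ℝ × (Fin d → ℝ) × ℝ,
      fderiv ℝ qf z w
        = V0 * fderiv ℝ F0 z w + (∑ i, Vm i * fderiv ℝ (Fm i) z w)
          + VE * fderiv ℝ FE z w := by
  intro Wf hf sf ηf qf F0 Fm FE V0 Vm VE w
  have hΓne : Γ - 1 ≠ 0 := sub_ne_zero.mpr hΓ1.ne'
  have hu : (0:ℝ) < 1 - ∑ i, z.2.1 i ^ 2 := by linarith
  have hSpos : 0 < Real.sqrt (1 - ∑ i, z.2.1 i ^ 2) := Real.sqrt_pos.mpr hu
  -- base derivatives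
  have hr : HasFDerivAt (fun y : ℝ × (Fin d → ℝ) × ℝ => y.1)
      (fst ℝ ℝ ((Fin d → ℝ) × ℝ)) z := hasFDerivAt_fst
  have hP : HasFDerivAt (fun y : ℝ × (Fin d → ℝ) × ℝ => y.2.2)
      ((snd ℝ (Fin d → ℝ) ℝ).comp (snd ℝ ℝ ((Fin d → ℝ) × ℝ))) z := hasFDerivAt_snd.snd
  have hvj : ∀ j : Fin d, HasFDerivAt (fun y : ℝ × (Fin d → ℝ) × ℝ => y.2.1 j)
      ((proj j).comp ((fst ℝ (Fin d → ℝ) ℝ).comp (snd ℝ ℝ ((Fin d → ℝ) × ℝ)))) z :=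
    fun j => by exact ((proj j : (Fin d → ℝ) →L[ℝ] ℝ).hasFDerivAt).comp z hasFDerivAt_snd.fst
  have ha := HasFDerivAt.fun_sum (u := Finset.univ) (x := z)
      (A := fun j y => (y.2.1 j) ^ 2)
      (fun j _ => by exact (hasDerivAt_pow 2 (z.2.1 j)).comp_hasFDerivAt z (hvj j))
  -- W
  have hg : HasDerivAt (fun t : ℝ => 1 / Real.sqrt t)
      (-(1 / (2 * Real.sqrt (1 - ∑ i, z.2.1 i ^ 2))) / Real.sqrt (1 - ∑ i, z.2.1 i ^ 2) ^ 2)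
      (1 - ∑ i, z.2.1 i ^ 2) := by
    simpa [one_div, Pi.inv_def] using ((Real.hasDerivAt_sqrt hu.ne').inv hSpos.ne')
  have hW := hg.comp_hasFDerivAt z (ha.const_sub 1)
  -- s
  have hop : IsOpen {y : ℝ × (Fin d → ℝ) × ℝ | 0 < y.1 ∧ 0 < y.2.2} :=
    (isOpen_lt continuous_const continuous_fst).inter
      (isOpen_lt continuous_const (continuous_snd.snd))
  have hsf_eq : (fun y : ℝ × (Fin d → ℝ) × ℝ => Real.log (y.2.2 / y.1 ^ Γ)) =ᶠ[nhds z]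
      (fun y => Real.log y.2.2 - Γ * Real.log y.1) := by
    filter_upwards [hop.mem_nhds ⟨hρ, hp⟩] with y hy
    rw [Real.log_div hy.2.ne' (Real.rpow_pos_of_pos hy.1 Γ).ne', Real.log_rpow hy.1]
  have hsf := (((Real.hasDerivAt_log hp.ne').comp_hasFDerivAt z hP).sub
      (((Real.hasDerivAt_log hρ.ne').comp_hasFDerivAt z hr).const_mul Γ)).congr_of_eventuallyEq
      hsf_eq
  -- h
  have hdne : (Γ - 1) * z.1 ≠ 0 := mul_ne_zero hΓne hρ.ne'
  have hh := ((hP.const_mul Γ).mul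
      ((hasDerivAt_inv hdne).comp_hasFDerivAt z (hr.const_mul (Γ - 1)))).const_add 1
  -- W^2
  have hW2 := (hasDerivAt_pow 2 (1 / Real.sqrt (1 - ∑ i, z.2.1 i ^ 2))).comp_hasFDerivAt z hW
  -- assembled
  have Tη := (((hr.mul hW).mul hsf).neg).mul_const (Γ - 1)⁻¹
  have Tq := Tη.mul (hvj k)
  have TF0 := (hr.mul hW).mul (hvj k)
  have TE := (hr.mul hh).mul hW2
  have TFE := TE.mul (hvj k)
  have TFm := fun i => ((TE.mul (hvj i)).mul (hvj k)).add
      (hP.mul_const (if i = k then (1:ℝ) else 0))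
  have eq_q := HasFDerivAt.fderiv (𝕜 := ℝ) (f := qf) Tq
  have eq_F0 := HasFDerivAt.fderiv (𝕜 := ℝ) (f := F0) TF0
  have eq_FE := HasFDerivAt.fderiv (𝕜 := ℝ) (f := FE) TFE
  have eq_Fm := fun i => HasFDerivAt.fderiv (𝕜 := ℝ) (f := Fm i) (TFm i)
  have hC : (∑ x : Fin d, 2 * z.2.1 x * w.2.1 x) = 2 * ∑ x : Fin d, z.2.1 x * w.2.1 x := by
    rw [Finset.mul_sum]; exact Finset.sum_congr rfl fun x _ => by ring
  rw [eq_q, eq_F0, eq_FE]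
  simp only [ContinuousLinearMap.add_apply, ContinuousLinearMap.smul_apply,
    ContinuousLinearMap.sub_apply, ContinuousLinearMap.neg_apply, ContinuousLinearMap.coe_comp',
    Function.comp_apply, ContinuousLinearMap.coe_fst', ContinuousLinearMap.coe_snd',
    ContinuousLinearMap.proj_apply, ContinuousLinearMap.sum_apply, smul_eq_mul,
    ContinuousLinearMap.coe_smul', Pi.smul_apply, Finset.sum_apply, neg_apply,
    Nat.reduceSub, Nat.cast_ofNat, pow_one, Pi.mul_apply, Pi.add_apply, Pi.sub_apply, Pi.neg_apply, Pi.inv_apply, V0, Vm, VE, Wf, sf]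
  rw [hC]
  set S := Real.sqrt (1 - ∑ x : Fin d, z.2.1 x ^ 2) with hS_def
  have hSpos' : 0 < S := by rw [hS_def]; exact Real.sqrt_pos.mpr hu
  have hS2 : S ^ 2 = 1 - ∑ x : Fin d, z.2.1 x ^ 2 := by rw [hS_def]; exact Real.sq_sqrt hu.le
  have hA : (∑ x : Fin d, z.2.1 x ^ 2) = 1 - S ^ 2 := by linarith
  have hpoint : ∀ i : Fin d, z.1 * (1 / S) * z.2.1 i / z.2.2 * fderiv ℝ (Fm i) z w
      = (z.1 * (1 / S) / z.2.2 * ((z.1 * (1 + Γ * z.2.2 * ((Γ - 1) * z.1)⁻¹) * (1 / S) ^ 2) * w.2.1 k + z.2.1 k * ((z.1 * (1 + Γ * z.2.2 * ((Γ - 1) * z.1)⁻¹) * (2 * (1 / S) * (-(1 / (2 * S)) / S ^ 2 * -(2 * (∑ x : Fin d, z.2.1 x * w.2.1 x)))) + (1 / S) ^ 2 * (z.1 * (Γ * z.2.2 * (-(((Γ - 1) * z.1) ^ 2)⁻¹ * ((Γ - 1) * w.1)) + ((Γ - 1) * z.1)⁻¹ * (Γ * w.2.2)) + (1 + Γ *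 z.2.2 * ((Γ - 1) * z.1)⁻¹) * w.1))))) * z.2.1 i ^ 2 + (z.1 * (1 / S) / z.2.2 * ((z.1 * (1 + Γ * z.2.2 * ((Γ - 1) * z.1)⁻¹) * (1 / S) ^ 2) * z.2.1 k)) * (z.2.1 i * w.2.1 i)
        + (if i = k then (z.1 * (1 / S) / z.2.2 * w.2.2) * z.2.1 i else 0) := by
    intro i
    rw [eq_Fm i]
    simp only [ContinuousLinearMap.add_apply, ContinuousLinearMap.smul_apply,
      ContinuousLinearMap.sub_apply, ContinuousLinearMap.neg_apply, ContinuousLinearMap.coe_comp',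
      Function.comp_apply, ContinuousLinearMap.coe_fst', ContinuousLinearMap.coe_snd',
      ContinuousLinearMap.proj_apply, ContinuousLinearMap.sum_apply, smul_eq_mul,
      ContinuousLinearMap.coe_smul', Pi.smul_apply, Finset.sum_apply, neg_apply,
      Nat.reduceSub, Nat.cast_ofNat, pow_one, Pi.mul_apply, Pi.add_apply, Pi.sub_apply, Pi.neg_apply, Pi.inv_apply]
    try rw [← hS_def]
    rw [hC]
    split_ifs with h
    · ring
    · ring
  have hsum : (∑ x : Fin d, z.1 * (1 / S) * z.2.1 x / z.2.2 * fderiv ℝ (Fm x) z w)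
      = (z.1 * (1 / S) / z.2.2 * ((z.1 * (1 + Γ * z.2.2 * ((Γ - 1) * z.1)⁻¹) * (1 / S) ^ 2) * w.2.1 k + z.2.1 k * ((z.1 * (1 + Γ * z.2.2 * ((Γ - 1) * z.1)⁻¹) * (2 * (1 / S) * (-(1 / (2 * S)) / S ^ 2 * -(2 * (∑ x : Fin d, z.2.1 x * w.2.1 x)))) + (1 / S) ^ 2 * (z.1 * (Γ * z.2.2 * (-(((Γ - 1) * z.1) ^ 2)⁻¹ * ((Γ - 1) * w.1)) + ((Γ - 1) * z.1)⁻¹ * (Γ * w.2.2)) + (1 + Γ * z.2.2 * ((Γ - 1) * z.1)⁻¹) * w.1))))) * (∑ x : Fin d, z.2.1 x ^ 2) + (z.1 * (1 / S) / z.2.2 * ((z.1 * (1 + Γ * z.2.2 * ((Γ - 1) * z.1)⁻¹) * (1 / S) ^ 2) * z.2.1 k)) * (∑ x : Fin d, z.2.1 x * w.2.1 x)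
        + (z.1 * (1 / S) / z.2.2 * w.2.2) * z.2.1 k := by
    rw [Finset.sum_congr rfl (fun i _ => hpoint i)]
    rw [Finset.sum_add_distrib, Finset.sum_add_distrib, ← Finset.mul_sum, ← Finset.mul_sum,
      Finset.sum_ite_eq' Finset.univ k]
    simp only [Finset.mem_univ, if_true]
  rw [hsum, hA]
  field_simp
  ring
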